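/- (Bounding client drift in the convex case.) Let F_1, …, F_M : ℝ^d → ℝ be convex, differentiable and L-smooth, let F = (1/M)Σ_{i=1}^M F_i, let w* be a minimizer of F, and assume (1/M) Σ_{i=1}^M ‖∇F_i(w*)‖² ≤ σ*². Fix τ ≥ 1 and 0 < η_l ≤ 1/(6τL). Given w^{(t)} ∈ ℝ^d, define local full-batch gradient descent iterates w_i^{(t,0)} = w^{(t)} and w_i^{(t,k+1)} = w_i^{(t,k)} − η_l ∇F_i(w_i^{(t,k)}) for k = 0,…,τ−1. Then (1/M) Σ_{i=1}^M Σ_{k=0}^{τ−1} ‖w^{(t)} − w_i^{(t,k)}‖² ≤ 12 η_l² τ²(τ−1) L (F(w^{(t)}) − F(w*)) + 6 η_l² τ²(τ−1) σ*². -/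

import Mathlib

open InnerProductSpace Finset intervalIntegral
open scoped RealInnerProductSpace

section Helpers

variable {E : Type*} [NormedAddCommGroup E] [InnerProductSpace ℝ E] [CompleteSpace E]

private lemma fderiv_apply_eq_inner_gradient {f : E → ℝ} {x : E}
    (hf : DifferentiableAt ℝ f x) (v : E) :
    fderiv ℝ f x v = ⟪gradient f x, v⟫ := by
  rw [hf.hasGradientAt.hasFDerivAt.fderiv, InnerProductSpace.toDual_apply_apply]

private lemma hasDerivAt_line {f : E → ℝ} (hf : Differentiable ℝ f) (x v : E) (t : ℝ) :
    HasDerivAt (fun s : ℝ => f (x + s • v)) ⟪gradient f (x + t • v), v⟫ t := by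
  have h1 : HasDerivAt (fun s : ℝ => x + s • v) v t := by
    simpa using ((hasDerivAt_id t).smul_const v).const_add x
  have h2 := ((hf (x + t • v)).hasFDerivAt).comp_hasDerivAt t h1
  rwa [fderiv_apply_eq_inner_gradient (hf _)] at h2

private lemma convex_lower {f : E → ℝ} (hc : ConvexOn ℝ Set.univ f) (hf : Differentiable ℝ f)
    (x y : E) : f x + ⟪gradient f x, y - x⟫ ≤ f y := by
  set g : ℝ → ℝ := fun t => f (x + t • (y - x)) with hg
  have hgc : ConvexOn ℝ Set.univ g := by
    have := hc.comp_affineMap (AffineMap.lineMap x y : ℝ →ᵃ[ℝ] E)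
    simp only [Set.preimage_univ] at this
    have heq : g = f ∘ ⇑(AffineMap.lineMap x y : ℝ →ᵃ[ℝ] E) := by
      funext t
      simp [g, AffineMap.lineMap_apply, add_comm]
    rw [heq]; exact this
  have hder : HasDerivAt g ⟪gradient f x, y - x⟫ 0 := by
    have := hasDerivAt_line hf x (y - x) 0
    simpa using this
  have hslope := hgc.le_slope_of_hasDerivAt (Set.mem_univ 0) (Set.mem_univ 1)
    one_pos hder
  have hg0 : g 0 = f x := by simp [g]
  have hg1 : g 1 = f y := by simp [g]
  rw [slope_def_field] at hslope
  simp [hg0, hg1] at hslope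
  have hfy := fderiv_apply_eq_inner_gradient (hf x) y
  have hfx := fderiv_apply_eq_inner_gradient (hf x) x
  rw [inner_sub_right]
  linarith

private lemma descent_lemma {f : E → ℝ} {L : ℝ} (hL : 0 ≤ L) (hf : Differentiable ℝ f)
    (hs : ∀ w w' : E, ‖gradient f w - gradient f w'‖ ≤ L * ‖w - w'‖) (x y : E) :
    f y ≤ f x + ⟪gradient f x, y - x⟫ + L / 2 * ‖y - x‖ ^ 2 := by
  set v := y - x with hv
  set g' : ℝ → ℝ := fun t => ⟪gradient f (x + t • v), v⟫ with hg'
  have hgradcont : Continuous (gradient f) := by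
    have : LipschitzWith (Real.toNNReal L) (gradient f) := by
      rw [lipschitzWith_iff_dist_le_mul]
      intro a b
      rw [dist_eq_norm, dist_eq_norm]
      simpa [Real.coe_toNNReal L hL] using hs a b
    exact this.continuous
  have hcont : Continuous g' := by
    apply Continuous.inner
    · exact hgradcont.comp (by continuity)
    · exact continuous_const
  have hftc : ∫ t in (0:ℝ)..1, g' t = f y - f x := by
    have := integral_eq_sub_of_hasDerivAt (f := fun t : ℝ => f (x + t • v)) (f' := g')
      (fun t _ => hasDerivAt_line hf x v t) (hcont.intervalIntegrable 0 1)
    simpa [hv] using this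
  have hmono : ∫ t in (0:ℝ)..1, g' t ≤ ∫ t in (0:ℝ)..1, (g' 0 + L * t * ‖v‖ ^ 2) := by
    apply integral_mono_on (by norm_num) (hcont.intervalIntegrable 0 1)
      (by apply Continuous.intervalIntegrable; continuity)
    intro t ht
    have h1 : g' t - g' 0 = ⟪gradient f (x + t • v) - gradient f x, v⟫ := by
      simp [g', inner_sub_left]
    have h2 : ⟪gradient f (x + t • v) - gradient f x, v⟫ ≤ L * t * ‖v‖ ^ 2 := by
      calc ⟪gradient f (x + t • v) - gradient f x, v⟫
          ≤ ‖gradient f (x + t • v) - gradient f x‖ * ‖v‖ := real_inner_le_norm _ _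
        _ ≤ (L * ‖(x + t • v) - x‖) * ‖v‖ := by
            apply mul_le_mul_of_nonneg_right (hs _ _) (norm_nonneg _)
        _ = L * t * ‖v‖ ^ 2 := by
            rw [add_sub_cancel_left, norm_smul, Real.norm_eq_abs, abs_of_nonneg ht.1]
            ring
    linarith [h1 ▸ h2]
  have hint : ∫ t in (0:ℝ)..1, (g' 0 + L * t * ‖v‖ ^ 2)
      = g' 0 + L / 2 * ‖v‖ ^ 2 := by
    rw [integral_add (by apply Continuous.intervalIntegrable; continuity)
      (by apply Continuous.intervalIntegrable; continuity)]
    have : ∫ t in (0:ℝ)..1, L * t * ‖v‖ ^ 2 = L / 2 * ‖v‖ ^ 2 := by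
      have : (fun t : ℝ => L * t * ‖v‖ ^ 2) = fun t : ℝ => (L * ‖v‖ ^ 2) * t := by
        funext t; ring
      rw [this, integral_const_mul, integral_id]
      ring
    simp [this]
  have hg'0 : g' 0 = ⟪gradient f x, v⟫ := by simp [g']
  have := hftc ▸ hmono
  rw [hint, hg'0] at this
  linarith

private lemma gradient_sub_inner {f : E → ℝ} (hf : Differentiable ℝ f) (c : E) (w : E) :
    gradient (fun z => f z - ⟪c, z⟫) w = gradient f w - c := by
  have h1 : HasFDerivAt (fun z : E => ⟪c, z⟫) (InnerProductSpace.toDual ℝ E c) w := by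
    have hfun : (fun z : E => ⟪c, z⟫) = ⇑(InnerProductSpace.toDual ℝ E c) := by
      funext z; simp [InnerProductSpace.toDual_apply_apply]
    rw [hfun]; exact (InnerProductSpace.toDual ℝ E c).hasFDerivAt (x := w)
  have h2 : HasFDerivAt f (InnerProductSpace.toDual ℝ E (gradient f w)) w :=
    (hf w).hasGradientAt.hasFDerivAt
  have h3 := h2.sub h1
  rw [← map_sub] at h3
  exact (h3.hasGradientAt.gradient).trans ((InnerProductSpace.toDual ℝ E).symm_apply_apply _)

private lemma cocoercivity {f : E → ℝ} {L : ℝ} (hL : 0 < L) (hc : ConvexOn ℝ Set.univ f)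
    (hf : Differentiable ℝ f)
    (hs : ∀ w w' : E, ‖gradient f w - gradient f w'‖ ≤ L * ‖w - w'‖) (x y : E) :
    ‖gradient f x - gradient f y‖ ^ 2 ≤ 2 * L * (f x - f y - ⟪gradient f y, x - y⟫) := by
  set c := gradient f y with hcdef
  set φ : E → ℝ := fun z => f z - ⟪c, z⟫ with hφ
  have hφdiff : Differentiable ℝ φ :=
    hf.sub (InnerProductSpace.toDual ℝ E c).differentiable
  have hφgrad : ∀ w, gradient φ w = gradient f w - c := fun w => gradient_sub_inner hf c w
  have hφconv : ConvexOn ℝ Set.univ φ := by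
    refine ⟨convex_univ, fun a _ b _ s t hs' ht' hst => ?_⟩
    have := hc.2 (Set.mem_univ a) (Set.mem_univ b) hs' ht' hst
    simp only [φ, inner_add_right, real_inner_smul_right, smul_eq_mul] at this ⊢
    linarith
  have hφsmooth : ∀ w w' : E, ‖gradient φ w - gradient φ w'‖ ≤ L * ‖w - w'‖ := by
    intro w w'
    rw [hφgrad, hφgrad]
    simpa using hs w w'
  have hmin : ∀ w, φ y ≤ φ w := by
    intro w
    have := convex_lower hφconv hφdiff y w
    rw [hφgrad y] at this
    simpa [hcdef] using this
  set g := gradient φ x with hgdef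
  have hgx : g = gradient f x - c := hφgrad x
  set z := x - L⁻¹ • g with hz
  have h1 : φ y ≤ φ z := hmin z
  have h2 : φ z ≤ φ x + ⟪g, z - x⟫ + L / 2 * ‖z - x‖ ^ 2 :=
    descent_lemma hL.le hφdiff hφsmooth x z
  have hzx : z - x = -(L⁻¹ • g) := by rw [hz]; abel
  have hinner : ⟪g, z - x⟫ = -(L⁻¹ * ‖g‖ ^ 2) := by
    rw [hzx, inner_neg_right, real_inner_smul_right, real_inner_self_eq_norm_sq]
  have hnorm : ‖z - x‖ ^ 2 = L⁻¹ ^ 2 * ‖g‖ ^ 2 := by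
    rw [hzx, norm_neg, norm_smul, Real.norm_eq_abs, abs_of_nonneg (inv_nonneg.2 hL.le)]
    ring
  have key : ‖g‖ ^ 2 ≤ 2 * L * (φ x - φ y) := by
    rw [hinner, hnorm] at h2
    have hLne : L ≠ 0 := hL.ne'
    have h12 := le_trans h1 h2
    have h3 : L / 2 * (L⁻¹ ^ 2 * ‖g‖ ^ 2) = (1 / (2 * L)) * ‖g‖ ^ 2 := by
      field_simp
    have h4 : L⁻¹ * ‖g‖ ^ 2 - (1 / (2 * L)) * ‖g‖ ^ 2 = (1 / (2 * L)) * ‖g‖ ^ 2 := by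
      field_simp; ring
    have h5 : (1 / (2 * L)) * ‖g‖ ^ 2 ≤ φ x - φ y := by linarith
    have h6 : ‖g‖ ^ 2 = 2 * L * ((1 / (2 * L)) * ‖g‖ ^ 2) := by
      field_simp
    rw [h6]
    exact mul_le_mul_of_nonneg_left h5 (by linarith)
  have hφxy : φ x - φ y = f x - f y - ⟪c, x - y⟫ := by
    simp only [φ, inner_sub_right]; ring
  rw [hgx] at key
  rw [hφxy] at key
  exact key

private lemma sq_norm_sum_le {E : Type*} [NormedAddCommGroup E]
    (v : ℕ → E) (k : ℕ) :
    ‖∑ j ∈ Finset.range k, v j‖ ^ 2 ≤ (k : ℝ) * ∑ j ∈ Finset.range k, ‖v j‖ ^ 2 := by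
  calc ‖∑ j ∈ Finset.range k, v j‖ ^ 2 ≤ (∑ j ∈ Finset.range k, ‖v j‖) ^ 2 := by
        apply pow_le_pow_left₀ (norm_nonneg _) (norm_sum_le _ _)
    _ ≤ #(Finset.range k) * ∑ j ∈ Finset.range k, ‖v j‖ ^ 2 := sq_sum_le_card_mul_sum_sq
    _ = (k : ℝ) * ∑ j ∈ Finset.range k, ‖v j‖ ^ 2 := by simp

end Helpers

set_option maxHeartbeats 1000000 in
/-- Bounding client drift in the convex case (Lemma 6 in the appendix). -/
theorem bounding_client_drift_convex {d M : ℕ} (hM : 0 < M)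
    (F : Fin M → EuclideanSpace ℝ (Fin d) → ℝ)
    (Fbar : EuclideanSpace ℝ (Fin d) → ℝ)
    (hFbar : ∀ w, Fbar w = (1 / (M : ℝ)) * ∑ i, F i w)
    (L ηl σstar : ℝ) (τ : ℕ) (hτ : 1 ≤ τ)
    (hconv : ∀ i, ConvexOn ℝ Set.univ (F i)) (hdiff : ∀ i, Differentiable ℝ (F i))
    (hsmooth : ∀ i, ∀ w w' : EuclideanSpace ℝ (Fin d),
      ‖gradient (F i) w - gradient (F i) w'‖ ≤ L * ‖w - w'‖)
    (wstar : EuclideanSpace ℝ (Fin d)) (hmin : ∀ w, Fbar wstar ≤ Fbar w)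
    (hσ : (1 / (M : ℝ)) * ∑ i, ‖gradient (F i) wstar‖ ^ 2 ≤ σstar ^ 2)
    (hηl : 0 < ηl) (hηlL : ηl ≤ 1 / (6 * τ * L))
    (wt : EuclideanSpace ℝ (Fin d))
    (wloc : Fin M → ℕ → EuclideanSpace ℝ (Fin d))
    (hwloc0 : ∀ i, wloc i 0 = wt)
    (hwlocrec : ∀ i, ∀ k < τ,
      wloc i (k + 1) = wloc i k - ηl • gradient (F i) (wloc i k)) :
    (1 / (M : ℝ)) * ∑ i, ∑ k ∈ Finset.range τ, ‖wt - wloc i k‖ ^ 2 ≤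
      12 * ηl ^ 2 * τ ^ 2 * (τ - 1) * L * (Fbar wt - Fbar wstar)
        + 6 * ηl ^ 2 * τ ^ 2 * (τ - 1) * σstar ^ 2 := by
  classical
  have hM' : (0:ℝ) < M := by exact_mod_cast hM
  have hMne : (M:ℝ) ≠ 0 := hM'.ne'
  have hτR : (1:ℝ) ≤ (τ:ℝ) := by exact_mod_cast hτ
  have hτ0 : (0:ℝ) < (τ:ℝ) := by linarith
  -- L is positive
  have hL : 0 < L := by
    by_contra h
    push_neg at h
    have h6 : 6 * (τ:ℝ) * L ≤ 0 := by nlinarith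
    have : 1 / (6 * (τ:ℝ) * L) ≤ 0 := by
      rcases eq_or_lt_of_le h6 with h' | h'
      · rw [h']; simp
      · exact le_of_lt (div_neg_of_pos_of_neg one_pos h')
    linarith
  have hηLτ : ηl * L ≤ 1 / (6 * (τ:ℝ)) := by
    calc ηl * L ≤ (1 / (6 * (τ:ℝ) * L)) * L := mul_le_mul_of_nonneg_right hηlL hL.le
      _ = 1 / (6 * (τ:ℝ)) := by field_simp
  -- sum of gradients at the minimizer vanishes
  have hFbarf : Fbar = fun w => (1 / (M:ℝ)) * ∑ i, F i w := funext hFbar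
  have hsumfd : HasFDerivAt Fbar
      ((1 / (M:ℝ)) • ∑ i, fderiv ℝ (F i) wstar) wstar := by
    rw [hFbarf]
    exact (HasFDerivAt.fun_sum (fun i _ => ((hdiff i) wstar).hasFDerivAt)).const_mul _
  have hloc : IsLocalMin Fbar wstar := Filter.Eventually.of_forall hmin
  have hD0 : ((1 / (M:ℝ)) • ∑ i, fderiv ℝ (F i) wstar) = 0 :=
    hloc.hasFDerivAt_eq_zero hsumfd
  have hgsum : ∑ i, gradient (F i) wstar = 0 := by
    set c : EuclideanSpace ℝ (Fin d) := ∑ i, gradient (F i) wstar with hc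
    have hcv : ∀ v : EuclideanSpace ℝ (Fin d), ⟪c, v⟫ = 0 := by
      intro v
      have h1 : ((1 / (M:ℝ)) • ∑ i, fderiv ℝ (F i) wstar) v = 0 := by rw [hD0]; rfl
      rw [ContinuousLinearMap.smul_apply, ContinuousLinearMap.sum_apply] at h1
      have h2 : ∑ i, fderiv ℝ (F i) wstar v = ∑ i, ⟪gradient (F i) wstar, v⟫ :=
        Finset.sum_congr rfl fun i _ =>
          fderiv_apply_eq_inner_gradient ((hdiff i) wstar) v
      rw [h2] at h1
      have h3 : ⟪c, v⟫ = ∑ i, ⟪gradient (F i) wstar, v⟫ := by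
        rw [hc, sum_inner]
      rw [h3]
      have : (1 / (M:ℝ)) ≠ 0 := by positivity
      field_simp at h1
      simpa [smul_eq_mul, hM.ne'] using h1
    have := hcv c
    exact inner_self_eq_zero.mp this
  have hinner0 : ∑ i, ⟪gradient (F i) wstar, wt - wstar⟫ = 0 := by
    rw [← sum_inner, hgsum, inner_zero_left]
  -- averaged cocoercivity
  have hsumF : ∀ w, ∑ i, F i w = (M:ℝ) * Fbar w := by
    intro w; rw [hFbar w]; field_simp
  set A := Fbar wt - Fbar wstar with hA
  have hA0 : 0 ≤ A := by have := hmin wt; simp [hA]; linarith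
  have hC : ∑ i, ‖gradient (F i) wt - gradient (F i) wstar‖ ^ 2
      ≤ 2 * L * (M:ℝ) * A := by
    calc ∑ i, ‖gradient (F i) wt - gradient (F i) wstar‖ ^ 2
        ≤ ∑ i, 2 * L * (F i wt - F i wstar - ⟪gradient (F i) wstar, wt - wstar⟫) :=
          Finset.sum_le_sum fun i _ =>
            cocoercivity hL (hconv i) (hdiff i) (hsmooth i) wt wstar
      _ = 2 * L * ((∑ i, F i wt) - (∑ i, F i wstar)
            - ∑ i, ⟪gradient (F i) wstar, wt - wstar⟫) := by
          rw [← Finset.mul_sum]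
          congr 1
          rw [Finset.sum_sub_distrib, Finset.sum_sub_distrib]
      _ = 2 * L * (M:ℝ) * A := by
          rw [hinner0, hsumF, hsumF, hA]; ring
  have hs2 : ∑ i, ‖gradient (F i) wstar‖ ^ 2 ≤ (M:ℝ) * σstar ^ 2 := by
    have h1 : (M:ℝ) * ((1 / (M:ℝ)) * ∑ i, ‖gradient (F i) wstar‖ ^ 2)
        ≤ (M:ℝ) * σstar ^ 2 := mul_le_mul_of_nonneg_left hσ hM'.le
    calc ∑ i, ‖gradient (F i) wstar‖ ^ 2
        = (M:ℝ) * ((1 / (M:ℝ)) * ∑ i, ‖gradient (F i) wstar‖ ^ 2) := by field_simp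
      _ ≤ (M:ℝ) * σstar ^ 2 := h1
  -- gradient norm bound at arbitrary points
  have hgb : ∀ i, ∀ w : EuclideanSpace ℝ (Fin d),
      ‖gradient (F i) w‖ ^ 2 ≤ 3 * L ^ 2 * ‖wt - w‖ ^ 2
        + 3 * ‖gradient (F i) wt - gradient (F i) wstar‖ ^ 2
        + 3 * ‖gradient (F i) wstar‖ ^ 2 := by
    intro i w
    have e1 : gradient (F i) w = (gradient (F i) w - gradient (F i) wt)
        + (gradient (F i) wt - gradient (F i) wstar) + gradient (F i) wstar := by abel
    have e2 : ‖gradient (F i) w‖ ≤ ‖gradient (F i) w - gradient (F i) wt‖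
        + ‖gradient (F i) wt - gradient (F i) wstar‖ + ‖gradient (F i) wstar‖ := by
      calc ‖gradient (F i) w‖
          = ‖(gradient (F i) w - gradient (F i) wt)
            + (gradient (F i) wt - gradient (F i) wstar) + gradient (F i) wstar‖ := by
            rw [← e1]
        _ ≤ _ := norm_add₃_le
    have e3 : ‖gradient (F i) w - gradient (F i) wt‖ ≤ L * ‖wt - w‖ := by
      have := hsmooth i w wt
      rwa [norm_sub_rev w wt] at this
    have n1 : (0:ℝ) ≤ ‖gradient (F i) w - gradient (F i) wt‖ := norm_nonneg _
    have n2 : (0:ℝ) ≤ ‖gradient (F i) wt - gradient (F i) wstar‖ := norm_nonneg _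
    have n3 : (0:ℝ) ≤ ‖gradient (F i) wstar‖ := norm_nonneg _
    have n4 : (0:ℝ) ≤ ‖gradient (F i) w‖ := norm_nonneg _
    have n5 : (0:ℝ) ≤ L * ‖wt - w‖ := mul_nonneg hL.le (norm_nonneg _)
    nlinarith [sq_nonneg (‖gradient (F i) w - gradient (F i) wt‖
        - ‖gradient (F i) wt - gradient (F i) wstar‖),
      sq_nonneg (‖gradient (F i) w - gradient (F i) wt‖ - ‖gradient (F i) wstar‖),
      sq_nonneg (‖gradient (F i) wt - gradient (F i) wstar‖ - ‖gradient (F i) wstar‖)]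
  -- representation of the iterates
  have hrepr : ∀ i, ∀ k, k ≤ τ →
      wt - wloc i k = ηl • ∑ j ∈ Finset.range k, gradient (F i) (wloc i j) := by
    intro i k
    induction k with
    | zero => intro _; simp [hwloc0 i]
    | succ k ih =>
      intro hk
      have hk' : k < τ := Nat.lt_of_lt_of_le (Nat.lt_succ_self k) hk
      rw [hwlocrec i k hk', Finset.sum_range_succ, smul_add, ← ih hk'.le]
      abel
  obtain ⟨m, hm⟩ : ∃ m, τ = m + 1 := ⟨τ - 1, (Nat.succ_pred_eq_of_pos hτ).symm⟩
  have hτm : ((τ:ℝ) - 1) = (m:ℝ) := by rw [hm]; push_cast; ring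
  have hm0 : (0:ℝ) ≤ (m:ℝ) := Nat.cast_nonneg m
  -- per-iterate drift bound
  have hek : ∀ i, ∀ k, k < τ → ‖wt - wloc i k‖ ^ 2
      ≤ ηl ^ 2 * (m:ℝ) * ∑ j ∈ Finset.range τ, ‖gradient (F i) (wloc i j)‖ ^ 2 := by
    intro i k hk
    have hkm : (k:ℝ) ≤ (m:ℝ) := by
      have : k ≤ m := by omega
      exact_mod_cast this
    have h1 := sq_norm_sum_le (fun j => gradient (F i) (wloc i j)) k
    have h2 : ∑ j ∈ Finset.range k, ‖gradient (F i) (wloc i j)‖ ^ 2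
        ≤ ∑ j ∈ Finset.range τ, ‖gradient (F i) (wloc i j)‖ ^ 2 :=
      Finset.sum_le_sum_of_subset_of_nonneg (Finset.range_subset_range.2 hk.le)
        (fun j _ _ => by positivity)
    have hnn : (0:ℝ) ≤ ∑ j ∈ Finset.range k, ‖gradient (F i) (wloc i j)‖ ^ 2 :=
      Finset.sum_nonneg fun j _ => by positivity
    calc ‖wt - wloc i k‖ ^ 2
        = ηl ^ 2 * ‖∑ j ∈ Finset.range k, gradient (F i) (wloc i j)‖ ^ 2 := by
          rw [hrepr i k hk.le, norm_smul, Real.norm_eq_abs, mul_pow, sq_abs]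
      _ ≤ ηl ^ 2 * ((k:ℝ) * ∑ j ∈ Finset.range k, ‖gradient (F i) (wloc i j)‖ ^ 2) :=
          mul_le_mul_of_nonneg_left h1 (sq_nonneg _)
      _ ≤ ηl ^ 2 * ((m:ℝ) * ∑ j ∈ Finset.range τ, ‖gradient (F i) (wloc i j)‖ ^ 2) := by
          apply mul_le_mul_of_nonneg_left _ (sq_nonneg _)
          exact mul_le_mul hkm h2 hnn hm0
      _ = ηl ^ 2 * (m:ℝ) * ∑ j ∈ Finset.range τ, ‖gradient (F i) (wloc i j)‖ ^ 2 := by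
          ring
  set S := ∑ i, ∑ k ∈ Finset.range τ, ‖wt - wloc i k‖ ^ 2 with hSdef
  have hS0 : 0 ≤ S := by positivity
  set Gs := ∑ i, ∑ j ∈ Finset.range τ, ‖gradient (F i) (wloc i j)‖ ^ 2 with hGdef
  have hSG : S ≤ ηl ^ 2 * (m:ℝ) * (τ:ℝ) * Gs := by
    calc S ≤ ∑ i, ∑ k ∈ Finset.range τ,
          (ηl ^ 2 * (m:ℝ) * ∑ j ∈ Finset.range τ, ‖gradient (F i) (wloc i j)‖ ^ 2) :=
        Finset.sum_le_sum fun i _ => Finset.sum_le_sum fun k hk =>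
          hek i k (Finset.mem_range.mp hk)
      _ = ∑ i, (τ:ℝ) * (ηl ^ 2 * (m:ℝ) * ∑ j ∈ Finset.range τ,
            ‖gradient (F i) (wloc i j)‖ ^ 2) := by
          refine Finset.sum_congr rfl fun i _ => ?_
          rw [Finset.sum_const, Finset.card_range, nsmul_eq_mul]
      _ = ηl ^ 2 * (m:ℝ) * (τ:ℝ) * Gs := by
          rw [hGdef, Finset.mul_sum]
          exact Finset.sum_congr rfl fun i _ => by ring
  have hGS : Gs ≤ 3 * L ^ 2 * S + 3 * (τ:ℝ) * (2 * L * (M:ℝ) * A)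
      + 3 * (τ:ℝ) * ((M:ℝ) * σstar ^ 2) := by
    have step1 : Gs ≤ ∑ i, ∑ j ∈ Finset.range τ,
        (3 * L ^ 2 * ‖wt - wloc i j‖ ^ 2
          + 3 * ‖gradient (F i) wt - gradient (F i) wstar‖ ^ 2
          + 3 * ‖gradient (F i) wstar‖ ^ 2) :=
      Finset.sum_le_sum fun i _ => Finset.sum_le_sum fun j _ => hgb i (wloc i j)
    have step2 : ∑ i, ∑ j ∈ Finset.range τ,
        (3 * L ^ 2 * ‖wt - wloc i j‖ ^ 2
          + 3 * ‖gradient (F i) wt - gradient (F i) wstar‖ ^ 2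
          + 3 * ‖gradient (F i) wstar‖ ^ 2)
        = 3 * L ^ 2 * S
          + 3 * (τ:ℝ) * (∑ i, ‖gradient (F i) wt - gradient (F i) wstar‖ ^ 2)
          + 3 * (τ:ℝ) * (∑ i, ‖gradient (F i) wstar‖ ^ 2) := by
      have inner_eq : ∀ i, ∑ j ∈ Finset.range τ,
          (3 * L ^ 2 * ‖wt - wloc i j‖ ^ 2
            + 3 * ‖gradient (F i) wt - gradient (F i) wstar‖ ^ 2
            + 3 * ‖gradient (F i) wstar‖ ^ 2)
          = 3 * L ^ 2 * (∑ j ∈ Finset.range τ, ‖wt - wloc i j‖ ^ 2)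
            + 3 * (τ:ℝ) * ‖gradient (F i) wt - gradient (F i) wstar‖ ^ 2
            + 3 * (τ:ℝ) * ‖gradient (F i) wstar‖ ^ 2 := by
        intro i
        rw [Finset.sum_add_distrib, Finset.sum_add_distrib, ← Finset.mul_sum,
          Finset.sum_const, Finset.sum_const, Finset.card_range, nsmul_eq_mul,
          nsmul_eq_mul]
        ring
      rw [Finset.sum_congr rfl fun i _ => inner_eq i]
      rw [Finset.sum_add_distrib, Finset.sum_add_distrib, ← Finset.mul_sum,
        ← Finset.mul_sum, ← Finset.mul_sum, hSdef]
    have step3 : 3 * (τ:ℝ) * (∑ i, ‖gradient (F i) wt - gradient (F i) wstar‖ ^ 2)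
        ≤ 3 * (τ:ℝ) * (2 * L * (M:ℝ) * A) :=
      mul_le_mul_of_nonneg_left hC (by positivity)
    have step4 : 3 * (τ:ℝ) * (∑ i, ‖gradient (F i) wstar‖ ^ 2)
        ≤ 3 * (τ:ℝ) * ((M:ℝ) * σstar ^ 2) :=
      mul_le_mul_of_nonneg_left hs2 (by positivity)
    calc Gs ≤ _ := step1
      _ = _ := step2
      _ ≤ _ := by
          apply add_le_add (add_le_add le_rfl step3) step4
  -- small coefficient
  have hq : 3 * ηl ^ 2 * L ^ 2 * (m:ℝ) * (τ:ℝ) ≤ 1 / 12 := by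
    have hmτ : (m:ℝ) ≤ (τ:ℝ) := by rw [hm]; push_cast; linarith
    have e1 : (ηl * L) ^ 2 ≤ (1 / (6 * (τ:ℝ))) ^ 2 :=
      pow_le_pow_left₀ (by positivity) hηLτ 2
    have e2 : ηl ^ 2 * L ^ 2 ≤ 1 / (36 * (τ:ℝ) ^ 2) := by
      calc ηl ^ 2 * L ^ 2 = (ηl * L) ^ 2 := by ring
        _ ≤ (1 / (6 * (τ:ℝ))) ^ 2 := e1
        _ = 1 / (36 * (τ:ℝ) ^ 2) := by field_simp; ring
    calc 3 * ηl ^ 2 * L ^ 2 * (m:ℝ) * (τ:ℝ)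
        = (ηl ^ 2 * L ^ 2) * (3 * (m:ℝ) * (τ:ℝ)) := by ring
      _ ≤ (1 / (36 * (τ:ℝ) ^ 2)) * (3 * (m:ℝ) * (τ:ℝ)) := by
          apply mul_le_mul_of_nonneg_right e2 (by positivity)
      _ ≤ (1 / (36 * (τ:ℝ) ^ 2)) * (3 * (τ:ℝ) * (τ:ℝ)) := by
          apply mul_le_mul_of_nonneg_left _ (by positivity)
          nlinarith
      _ = 1 / 12 := by field_simp; ring
  -- combine everything
  have hGs0 : 0 ≤ Gs := by positivity
  have hcomb : S ≤ 3 * ηl ^ 2 * L ^ 2 * (m:ℝ) * (τ:ℝ) * S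
      + 6 * ηl ^ 2 * (m:ℝ) * (τ:ℝ) ^ 2 * L * (M:ℝ) * A
      + 3 * ηl ^ 2 * (m:ℝ) * (τ:ℝ) ^ 2 * (M:ℝ) * σstar ^ 2 := by
    have h1 : ηl ^ 2 * (m:ℝ) * (τ:ℝ) * Gs
        ≤ ηl ^ 2 * (m:ℝ) * (τ:ℝ) * (3 * L ^ 2 * S + 3 * (τ:ℝ) * (2 * L * (M:ℝ) * A)
          + 3 * (τ:ℝ) * ((M:ℝ) * σstar ^ 2)) :=
      mul_le_mul_of_nonneg_left hGS (by positivity)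
    calc S ≤ ηl ^ 2 * (m:ℝ) * (τ:ℝ) * Gs := hSG
      _ ≤ _ := h1
      _ = _ := by ring
  have hqS : 3 * ηl ^ 2 * L ^ 2 * (m:ℝ) * (τ:ℝ) * S ≤ (1 / 12) * S :=
    mul_le_mul_of_nonneg_right hq hS0
  have hLA : 0 ≤ L * A := mul_nonneg hL.le hA0
  have hP : (0:ℝ) ≤ ηl ^ 2 * (m:ℝ) * (τ:ℝ) ^ 2 := by positivity
  have hD1 : 0 ≤ 6 * ηl ^ 2 * (m:ℝ) * (τ:ℝ) ^ 2 * L * (M:ℝ) * A := by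
    have : 6 * ηl ^ 2 * (m:ℝ) * (τ:ℝ) ^ 2 * L * (M:ℝ) * A
        = (6 * (ηl ^ 2 * (m:ℝ) * (τ:ℝ) ^ 2) * (M:ℝ)) * (L * A) := by ring
    rw [this]
    exact mul_nonneg (by positivity) hLA
  have hD2 : 0 ≤ 3 * ηl ^ 2 * (m:ℝ) * (τ:ℝ) ^ 2 * (M:ℝ) * σstar ^ 2 := by positivity
  have hfin : S ≤ (M:ℝ) * (12 * ηl ^ 2 * (τ:ℝ) ^ 2 * (m:ℝ) * L * A
      + 6 * ηl ^ 2 * (τ:ℝ) ^ 2 * (m:ℝ) * σstar ^ 2) := by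
    nlinarith [hcomb, hqS, hS0, hD1, hD2]
  have hgoal : (1 / (M:ℝ)) * S ≤ 12 * ηl ^ 2 * (τ:ℝ) ^ 2 * (m:ℝ) * L * A
      + 6 * ηl ^ 2 * (τ:ℝ) ^ 2 * (m:ℝ) * σstar ^ 2 := by
    have := mul_le_mul_of_nonneg_left hfin (le_of_lt (by positivity : (0:ℝ) < 1 / (M:ℝ)))
    calc (1 / (M:ℝ)) * S ≤ (1 / (M:ℝ)) * ((M:ℝ) * (12 * ηl ^ 2 * (τ:ℝ) ^ 2 * (m:ℝ) * L * A
          + 6 * ηl ^ 2 * (τ:ℝ) ^ 2 * (m:ℝ) * σstar ^ 2)) := this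
      _ = _ := by field_simp
  rw [hτm]
  calc (1 / (M:ℝ)) * ∑ i, ∑ k ∈ Finset.range τ, ‖wt - wloc i k‖ ^ 2
      = (1 / (M:ℝ)) * S := by rw [hSdef]
    _ ≤ 12 * ηl ^ 2 * (τ:ℝ) ^ 2 * (m:ℝ) * L * A
        + 6 * ηl ^ 2 * (τ:ℝ) ^ 2 * (m:ℝ) * σstar ^ 2 := hgoal
    _ = 12 * ηl ^ 2 * (τ:ℝ) ^ 2 * (m:ℝ) * L * (Fbar wt - Fbar wstar)
        + 6 * ηl ^ 2 * (τ:ℝ) ^ 2 * (m:ℝ) * σstar ^ 2 := by rw [hA]
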